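/- Let X and Y be metric spaces with X complete, and let f : X → Y be a continuous surjection that is uniformly open, i.e., for every r > 0 there exists δ > 0 such that B(f(x), δ) ⊆ f(B(x, r)) for all x ∈ X. Then f is density-surjective: there exists Z ⊆ X with dens(Z) = dens(Y) such that f(Z) = Y. -/
import Mathlib


noncomputable def densityCharacter (X : Type*) [TopologicalSpace X] : Cardinal :=
  sInf {c | ∃ s : Set X, Dense s ∧ Cardinal.mk s = c}

open Cardinal Metric Set Filter

lemma densChar_le {A : Type*} [TopologicalSpace A] {s : Set A} (h : Dense s) :
    densityCharacter A ≤ Cardinal.mk s :=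
  csInf_le (OrderBot.bddBelow _) ⟨s, h, rfl⟩

lemma densChar_exists (A : Type*) [TopologicalSpace A] :
    ∃ s : Set A, Dense s ∧ Cardinal.mk s = densityCharacter A := by
  have h : {c | ∃ s : Set A, Dense s ∧ Cardinal.mk s = c}.Nonempty :=
    ⟨Cardinal.mk (Set.univ : Set A), Set.univ, dense_univ, rfl⟩
  exact csInf_mem h

lemma densChar_mono {A B : Type u} [TopologicalSpace A] [TopologicalSpace B]
    (g : A → B) (hg : Continuous g) (hsg : Function.Surjective g) :
    densityCharacter B ≤ densityCharacter A := by
  obtain ⟨s, hds, hcard⟩ := densChar_exists A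
  calc densityCharacter B ≤ Cardinal.mk (g '' s) :=
        densChar_le (hsg.denseRange.dense_image hg hds)
    _ ≤ Cardinal.mk s := Cardinal.mk_image_le
    _ = _ := hcard

lemma densChar_finite {A : Type*} [TopologicalSpace A] [T1Space A] (h : Finite A) :
    densityCharacter A = Cardinal.mk A := by
  obtain ⟨s, hds, hcard⟩ := densChar_exists A
  have hsu : s = Set.univ := by
    have h1 : closure s = s := s.toFinite.isClosed.closure_eq
    rw [hds.closure_eq] at h1
    exact h1.symm
  rw [← hcard, hsu, Cardinal.mk_univ]

lemma dense_preimage_val {A : Type*} [TopologicalSpace A] (T : Set A) :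
    Dense (Subtype.val ⁻¹' T : Set (closure T)) := by
  intro x
  rw [closure_subtype]
  have h : Subtype.val '' (Subtype.val ⁻¹' T : Set (closure T)) = T := by
    rw [Set.image_preimage_eq_inter_range, Subtype.range_val]
    exact Set.inter_eq_self_of_subset_left subset_closure
  rw [h]
  exact x.2

theorem stmt8 {X Y : Type u} [MetricSpace X] [MetricSpace Y] [CompleteSpace X]
    (f : X → Y) (hf : Continuous f) (hs : Function.Surjective f)
    (huo : ∀ r : ℝ, 0 < r → ∃ δ : ℝ, 0 < δ ∧
      ∀ x : X, Metric.ball (f x) δ ⊆ f '' Metric.ball x r) :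
    ∃ Z : Set X, densityCharacter Z = densityCharacter Y ∧ f '' Z = Set.univ := by
  classical
  obtain ⟨D, hD, hDcard⟩ := densChar_exists Y
  choose g hg using hs
  by_cases hfin : densityCharacter Y < Cardinal.aleph0
  · -- finite case
    have hDfin : D.Finite := by
      rw [← Set.finite_coe_iff]
      exact Cardinal.mk_lt_aleph0_iff.1 (hDcard ▸ hfin)
    have hDu : D = Set.univ := by
      have h1 : closure D = D := hDfin.isClosed.closure_eq
      rw [hD.closure_eq] at h1; exact h1.symm
    have hYfin : Finite Y := by
      rw [← Set.finite_univ_iff]; exact hDu ▸ hDfin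
    have hginj : Function.Injective g := by
      intro a b hab
      rw [← hg a, ← hg b, hab]
    refine ⟨Set.range g, ?_, ?_⟩
    · have hZfin : Finite (Set.range g) := Set.finite_range g
      rw [densChar_finite hZfin, densChar_finite hYfin]
      exact (Cardinal.mk_congr (Equiv.ofInjective g hginj)).symm
    · apply Set.eq_univ_of_forall
      intro y
      exact ⟨g y, Set.mem_range_self y, hg y⟩
  · -- infinite case
    push_neg at hfin
    set κ := densityCharacter Y with hκdef
    have Hδ : ∀ n : ℕ, ∃ δ : ℝ, 0 < δ ∧ δ ≤ (1/2 : ℝ)^n ∧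
        ∀ x, ball (f x) δ ⊆ f '' ball x ((1/2 : ℝ)^n) := by
      intro n
      obtain ⟨δ, hδpos, hδ⟩ := huo ((1/2 : ℝ)^n) (by positivity)
      exact ⟨min δ ((1/2 : ℝ)^n), by positivity, min_le_right _ _,
        fun x => (ball_subset_ball (min_le_left _ _)).trans (hδ x)⟩
    choose δ δpos δle hδ using Hδ
    set pick : ℕ → X → Y → X := fun n x y =>
      if h : y ∈ f '' ball x ((1/2 : ℝ)^n) then h.choose else x with hpickdef
    have pick_spec : ∀ n x y, y ∈ ball (f x) (δ n) →
        pick n x y ∈ ball x ((1/2 : ℝ)^n) ∧ f (pick n x y) = y := by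
      intro n x y hy
      have h : y ∈ f '' ball x ((1/2 : ℝ)^n) := hδ n x hy
      simp only [hpickdef, dif_pos h]
      exact ⟨h.choose_spec.1, h.choose_spec.2⟩
    set S : ℕ → Set X := fun n =>
      Nat.rec (g '' D) (fun n Sn => Sn ∪ Set.image2 (pick n) Sn D) n with hSdef
    have S_succ : ∀ n, S (n+1) = S n ∪ Set.image2 (pick n) (S n) D := fun n => rfl
    -- cardinality bound
    have Scard : ∀ n, Cardinal.mk (S n) ≤ κ := by
      intro n
      induction n with
      | zero =>
        calc Cardinal.mk (S 0) ≤ Cardinal.mk D := Cardinal.mk_image_le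
          _ = κ := hDcard
      | succ n ih =>
        have h2 : Cardinal.mk (Set.image2 (pick n) (S n) D) ≤ κ := by
          rw [← Set.image_prod]
          calc Cardinal.mk ((fun p : X × Y => pick n p.1 p.2) '' (S n ×ˢ D))
              ≤ Cardinal.mk (S n ×ˢ D : Set (X × Y)) := Cardinal.mk_image_le
            _ = Cardinal.mk (S n) * Cardinal.mk D := by
                rw [Cardinal.mk_congr (Equiv.Set.prod (S n) D), Cardinal.mk_prod,
                  Cardinal.lift_id, Cardinal.lift_id]
            _ ≤ κ * κ := mul_le_mul' ih (le_of_eq hDcard)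
            _ ≤ κ := by
                rcases Cardinal.mul_le_max κ κ with h
                calc κ * κ ≤ κ ⊔ κ ⊔ Cardinal.aleph0 := h
                  _ ≤ κ := by simp [hfin]
        calc Cardinal.mk (S (n+1)) = Cardinal.mk (S n ∪ Set.image2 (pick n) (S n) D : Set X) := by
              rw [S_succ]
          _ ≤ Cardinal.mk (S n) + Cardinal.mk (Set.image2 (pick n) (S n) D) :=
              Cardinal.mk_union_le _ _
          _ ≤ κ + κ := add_le_add ih h2
          _ = κ := Cardinal.add_eq_self hfin
    set T : Set X := ⋃ n, S n with hTdef
    have Tcard : Cardinal.mk T ≤ κ := by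
      have h1 := Cardinal.mk_iUnion_le_sum_mk_lift (f := S)
      rw [Cardinal.lift_uzero] at h1
      calc Cardinal.mk T ≤ Cardinal.sum fun n => Cardinal.mk (S n) := h1
        _ ≤ Cardinal.sum fun _ : ℕ => κ := Cardinal.sum_le_sum _ _ Scard
        _ = Cardinal.lift.{u,0} (Cardinal.mk ℕ) * Cardinal.lift.{0,u} κ :=
            Cardinal.sum_const ℕ κ
        _ = Cardinal.aleph0 * κ := by rw [Cardinal.mk_nat, Cardinal.lift_aleph0,
              Cardinal.lift_uzero]
        _ ≤ κ := by
            calc Cardinal.aleph0 * κ ≤ Cardinal.aleph0 ⊔ κ ⊔ Cardinal.aleph0 :=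
                Cardinal.mul_le_max _ _
              _ ≤ κ := by simp [hfin]
    -- surjectivity of f on closure T
    have hDnear : ∀ (y : Y) (ε : ℝ), 0 < ε → ∃ d ∈ D, dist d y < ε := by
      intro y ε hε
      obtain ⟨d, hd1, hd2⟩ := Metric.dense_iff.1 hD y ε hε
      exact ⟨d, hd2, mem_ball.1 hd1⟩
    have hsurj : ∀ y : Y, ∃ x ∈ closure T, f x = y := by
      intro y
      have key : ∀ n (x : X), x ∈ S n → dist (f x) y < δ n / 2 →
          ∃ x', x' ∈ S (n+1) ∧ dist (f x') y < δ (n+1) / 2 ∧ dist x' x < (1/2 : ℝ)^n := by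
        intro n x hx hclose
        obtain ⟨d, hdD, hd⟩ := hDnear y (min (δ n / 2) (δ (n+1) / 2))
          (lt_min (by linarith [δpos n]) (by linarith [δpos (n+1)]))
        have hmem : d ∈ ball (f x) (δ n) := by
          rw [mem_ball]
          calc dist d (f x) ≤ dist d y + dist y (f x) := dist_triangle _ _ _
            _ < δ n / 2 + δ n / 2 :=
                add_lt_add (lt_of_lt_of_le hd (min_le_left _ _))
                  (by rw [dist_comm]; exact hclose)
            _ = δ n := by ring
        obtain ⟨hb, hfeq⟩ := pick_spec n x d hmem
        refine ⟨pick n x d, ?_, ?_, mem_ball.1 hb⟩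
        · rw [S_succ]; exact Or.inr (Set.mem_image2_of_mem hx hdD)
        · rw [hfeq]; exact lt_of_lt_of_le hd (min_le_right _ _)
      obtain ⟨d0, hd0D, hd0⟩ := hDnear y (δ 0 / 2) (by linarith [δpos 0])
      set P : ℕ → X → Prop := fun n x => x ∈ S n ∧ dist (f x) y < δ n / 2 with hPdef
      have base : P 0 (g d0) := ⟨Set.mem_image_of_mem g hd0D, by rw [hg]; exact hd0⟩
      have step : ∀ n x, P n x → ∃ x', P (n+1) x' ∧ dist x' x < (1/2 : ℝ)^n := by
        intro n x h
        obtain ⟨x', h1, h2, h3⟩ := key n x h.1 h.2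
        exact ⟨x', ⟨h1, h2⟩, h3⟩
      set u : ∀ n : ℕ, {x : X // P n x} := fun n => Nat.rec ⟨g d0, base⟩
        (fun n p => ⟨(step n p.1 p.2).choose, (step n p.1 p.2).choose_spec.1⟩) n with hudef
      have hu : ∀ n, dist ((u (n+1) : X)) (u n : X) < (1/2 : ℝ)^n := by
        intro n
        exact (step n (u n).1 (u n).2).choose_spec.2
      have hcauchy : CauchySeq (fun n => (u n : X)) := by
        apply cauchySeq_of_le_geometric (1/2 : ℝ) 1 (by norm_num)
        intro n
        rw [dist_comm, one_mul]
        exact le_of_lt (hu n)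
      obtain ⟨xl, hxl⟩ := cauchySeq_tendsto_of_complete hcauchy
      have hmemT : ∀ n, (u n : X) ∈ T := fun n => Set.mem_iUnion.2 ⟨n, (u n).2.1⟩
      have hxlmem : xl ∈ closure T :=
        mem_closure_of_tendsto hxl (Filter.Eventually.of_forall hmemT)
      have hfy : Filter.Tendsto (fun n => f (u n : X)) Filter.atTop (nhds y) := by
        rw [tendsto_iff_dist_tendsto_zero]
        apply squeeze_zero (fun n => dist_nonneg) (g := fun n => (1/2 : ℝ)^n)
        · intro n
          have h1 : dist (f (u n : X)) y < δ n / 2 := (u n).2.2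
          have h2 : δ n ≤ (1/2 : ℝ)^n := δle n
          linarith [δpos n]
        · exact tendsto_pow_atTop_nhds_zero_of_lt_one (by norm_num) (by norm_num)
      have hfxl : Filter.Tendsto (fun n => f (u n : X)) Filter.atTop (nhds (f xl)) :=
        (hf.tendsto xl).comp hxl
      exact ⟨xl, hxlmem, tendsto_nhds_unique hfxl hfy⟩
    refine ⟨closure T, ?_, ?_⟩
    · apply le_antisymm
      · calc densityCharacter (closure T)
            ≤ Cardinal.mk (Subtype.val ⁻¹' T : Set (closure T)) :=
              densChar_le (dense_preimage_val T)
          _ ≤ Cardinal.mk T := Cardinal.mk_preimage_of_injective _ _ Subtype.val_injective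
          _ ≤ κ := Tcard
      · exact densChar_mono (fun z : closure T => f z) (hf.comp continuous_subtype_val)
          (fun y => by
            obtain ⟨x, hx, hfx⟩ := hsurj y
            exact ⟨⟨x, hx⟩, hfx⟩)
    · apply Set.eq_univ_of_forall
      intro y
      obtain ⟨x, hx, hfx⟩ := hsurj y
      exact ⟨x, hx, hfx⟩
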